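/- Every perfect positive definite quadratic form Q in d variables with λ(Q) = 1 is arithmetically equivalent to a form Q' with trace Q' ≤ d · (4/3)^{d(d−1)/2}. -/

import Mathlib

open Matrix

/-- The real vector corresponding to an integral vector. -/
def castVec {d : ℕ} (x : Fin d → ℤ) : Fin d → ℝ := fun i => (x i : ℝ)

/-- Evaluation `Q[x] = xᵗ Q x` of a quadratic form at an integral vector. -/
def qeval {d : ℕ} (Q : Matrix (Fin d) (Fin d) ℝ) (x : Fin d → ℤ) : ℝ :=
  castVec x ⬝ᵥ Q.mulVec (castVec x)

/-- The real matrix corresponding to an integral matrix. -/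
def castMat {d : ℕ} (U : Matrix (Fin d) (Fin d) ℤ) : Matrix (Fin d) (Fin d) ℝ :=
  U.map fun z => (z : ℝ)

lemma castVec_mulVec {d : ℕ} (W : Matrix (Fin d) (Fin d) ℤ) (x : Fin d → ℤ) :
    castVec (W.mulVec x) = (castMat W).mulVec (castVec x) := by
  funext i
  simp [castVec, castMat, Matrix.mulVec, dotProduct]

lemma castMat_mul {d : ℕ} (A B : Matrix (Fin d) (Fin d) ℤ) :
    castMat (A * B) = castMat A * castMat B := by
  ext i j
  simp [castMat, Matrix.mul_apply]

lemma qeval_real {d : ℕ} (Q : Matrix (Fin d) (Fin d) ℝ) (x : Fin d → ℤ) :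
    qeval Q x = castVec x ⬝ᵥ Q.mulVec (castVec x) := rfl

/-- change of variables for qeval -/
lemma qeval_transform {d : ℕ} (Q : Matrix (Fin d) (Fin d) ℝ)
    (W : Matrix (Fin d) (Fin d) ℤ) (x : Fin d → ℤ) :
    qeval ((castMat W)ᵀ * Q * castMat W) x = qeval Q (W.mulVec x) := by
  rw [qeval_real, qeval_real, castVec_mulVec]
  rw [← Matrix.mulVec_mulVec, ← Matrix.mulVec_mulVec, Matrix.dotProduct_mulVec,
    Matrix.vecMul_transpose]

/-- trace as sum of column evaluations -/
lemma trace_eq_sum_qeval {d : ℕ} (Q : Matrix (Fin d) (Fin d) ℝ)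
    (U : Matrix (Fin d) (Fin d) ℤ) :
    ((castMat U)ᵀ * Q * castMat U).trace = ∑ j, qeval Q (fun i => U i j) := by
  rw [Matrix.trace]
  refine Finset.sum_congr rfl fun j _ => ?_
  rw [qeval_real]
  simp only [Matrix.diag_apply, Matrix.mul_apply, Matrix.transpose_apply,
    dotProduct, Matrix.mulVec, castMat, castVec, Matrix.map_apply]
  simp_rw [Finset.sum_mul, Finset.mul_sum]
  rw [Finset.sum_comm]
  refine Finset.sum_congr rfl fun i _ => Finset.sum_congr rfl fun k _ => ?_
  ring

section Schur
variable {e : ℕ} (Q : Matrix (Fin (e+1)) (Fin (e+1)) ℝ)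

/-- lower-right block minus rank-one correction (Schur complement) -/
noncomputable def schur (Q : Matrix (Fin (e+1)) (Fin (e+1)) ℝ) : Matrix (Fin e) (Fin e) ℝ :=
  Matrix.of fun i j => Q i.succ j.succ - Q i.succ 0 * Q j.succ 0 / Q 0 0

lemma quad_expand (hsymm : Qᵀ = Q) (x : Fin (e+1) → ℝ) :
    x ⬝ᵥ Q.mulVec x =
      Q 0 0 * x 0 ^ 2 + 2 * x 0 * ((fun i => Q i.succ 0) ⬝ᵥ Fin.tail x) +
        Fin.tail x ⬝ᵥ (Q.submatrix Fin.succ Fin.succ).mulVec (Fin.tail x) := by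
  have hq : ∀ j : Fin e, Q 0 j.succ = Q j.succ 0 := fun j => by
    conv_lhs => rw [← hsymm]
    rfl
  simp only [dotProduct, Matrix.mulVec, Fin.sum_univ_succ, dotProduct,
    Fin.tail, Matrix.submatrix_apply, hq]
  simp only [mul_add, Finset.mul_sum, Finset.sum_add_distrib]
  have h2 : ∑ i : Fin e, 2 * x 0 * (Q i.succ 0 * x i.succ)
      = ∑ i : Fin e, x 0 * (Q i.succ 0 * x i.succ) + ∑ i : Fin e, x i.succ * (Q i.succ 0 * x 0) := by
    rw [← Finset.sum_add_distrib]; exact Finset.sum_congr rfl fun i _ => by ring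
  rw [h2]; ring

lemma schur_quad (ha : Q 0 0 ≠ 0) (t : Fin e → ℝ) :
    t ⬝ᵥ (schur Q).mulVec t =
      t ⬝ᵥ (Q.submatrix Fin.succ Fin.succ).mulVec t -
        ((fun i => Q i.succ 0) ⬝ᵥ t) ^ 2 / Q 0 0 := by
  simp only [schur, dotProduct, Matrix.mulVec, Matrix.of_apply, dotProduct,
    Matrix.submatrix_apply]
  simp only [sub_mul, mul_sub, Finset.sum_sub_distrib, Finset.mul_sum]
  rw [sub_right_inj, pow_two, Finset.sum_mul_sum, div_eq_mul_inv, Finset.sum_mul]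
  simp only [Finset.sum_mul]
  refine Finset.sum_congr rfl fun i _ => Finset.sum_congr rfl fun j _ => ?_
  field_simp

/-- The key decomposition `Q[x] = a (x₀ + b·t/a)² + Q̄[t]`. -/
lemma key_identity (hsymm : Qᵀ = Q) (ha : Q 0 0 ≠ 0) (x : Fin (e+1) → ℝ) :
    x ⬝ᵥ Q.mulVec x =
      Q 0 0 * (x 0 + ((fun i => Q i.succ 0) ⬝ᵥ Fin.tail x) / Q 0 0) ^ 2 +
        Fin.tail x ⬝ᵥ (schur Q).mulVec (Fin.tail x) := by
  rw [quad_expand Q hsymm, schur_quad Q ha]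
  field_simp
  ring

end Schur

/-- convenient positive-definiteness predicate over ℝ -/
def PD {d : ℕ} (Q : Matrix (Fin d) (Fin d) ℝ) : Prop :=
  Qᵀ = Q ∧ ∀ x : Fin d → ℝ, x ≠ 0 → 0 < x ⬝ᵥ Q.mulVec x

lemma castVec_eq_zero_iff {d : ℕ} {x : Fin d → ℤ} : castVec x = 0 ↔ x = 0 := by
  constructor
  · intro h; funext i
    have := congrFun h i
    simpa [castVec] using this
  · rintro rfl; funext i; simp [castVec]

lemma PD.qeval_nonneg {d : ℕ} {Q : Matrix (Fin d) (Fin d) ℝ} (hQ : PD Q) (x : Fin d → ℤ) :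
    0 ≤ qeval Q x := by
  by_cases hx : x = 0
  · subst hx
    simp [qeval, show castVec (0 : Fin d → ℤ) = 0 from castVec_eq_zero_iff.2 rfl]
  · exact le_of_lt (hQ.2 _ (fun h => hx (castVec_eq_zero_iff.1 h)))

lemma PD.qeval_pos {d : ℕ} {Q : Matrix (Fin d) (Fin d) ℝ} (hQ : PD Q) {x : Fin d → ℤ}
    (hx : x ≠ 0) : 0 < qeval Q x :=
  hQ.2 _ (fun h => hx (castVec_eq_zero_iff.1 h))

lemma PD.a_pos {e : ℕ} {Q : Matrix (Fin (e+1)) (Fin (e+1)) ℝ} (hQ : PD Q) : 0 < Q 0 0 := by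
  have h := hQ.2 (Pi.single 0 1) (by
    intro h
    have := congrFun h 0
    simp at this)
  calc (0:ℝ) < _ := h
    _ = Q 0 0 := by
      simp [dotProduct, Matrix.mulVec, Pi.single_apply]

lemma PD.schurPD {e : ℕ} {Q : Matrix (Fin (e+1)) (Fin (e+1)) ℝ} (hQ : PD Q) : PD (schur Q) := by
  have ha := hQ.a_pos
  constructor
  · ext i j
    have hsy : ∀ i j, Q j i = Q i j := fun i j => by
      conv_lhs => rw [← hQ.1]
      rfl
    simp only [Matrix.transpose_apply, _root_.schur, Matrix.of_apply, hsy]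
    ring
  · intro y hy
    set S := (fun i => Q i.succ 0) ⬝ᵥ y with hS
    have hkey := key_identity Q hQ.1 (ne_of_gt ha) (Fin.cons (-(S / Q 0 0)) y)
    rw [Fin.tail_cons, Fin.cons_zero] at hkey
    have hx : (Fin.cons (-(S / Q 0 0)) y : Fin (e+1) → ℝ) ≠ 0 := by
      intro h
      apply hy
      funext i
      have := congrFun h i.succ
      simpa [Fin.cons_succ] using this
    have hpos := hQ.2 _ hx
    rw [hkey] at hpos
    simpa [hS] using hpos

section Completion
variable {n : ℕ}

/-- The saturation of the line through `v` inside `ℤ^(n+1)`. -/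
def lineSat (v : Fin (n+1) → ℤ) : Submodule ℤ (Fin (n+1) → ℤ) where
  carrier := {x | ∀ i j, x i * v j = x j * v i}
  add_mem' := by
    intro x y hx hy i j
    simp only [Pi.add_apply, add_mul]
    rw [hx i j, hy i j]
  zero_mem' := by intro i j; simp
  smul_mem' := by
    intro c x hx i j
    simp only [Pi.smul_apply, smul_eq_mul, mul_assoc]
    rw [hx i j]

lemma exists_unimodular_col (v : Fin (n+1) → ℤ) (hv : v ≠ 0) :
    ∃ (W : Matrix (Fin (n+1)) (Fin (n+1)) ℤ) (k : ℤ), (W.det = 1 ∨ W.det = -1) ∧ k ≠ 0 ∧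
      ∀ i, v i = k * W i 0 := by
  classical
  obtain ⟨i₀, hi₀⟩ : ∃ i, v i ≠ 0 := by
    by_contra h
    push_neg at h
    exact hv (funext h)
  set M : Submodule ℤ (Fin (n+1) → ℤ) := lineSat v with hMdef
  have hvM : v ∈ M := fun i j => mul_comm (v i) (v j)
  -- members of M with i₀-coordinate zero are zero
  have hMzero : ∀ x ∈ M, x i₀ = 0 → x = 0 := by
    intro x hx h0
    funext j
    have := hx j i₀
    rw [h0, zero_mul] at this
    exact (mul_eq_zero.1 this).resolve_right hi₀
  -- the image of M under the i₀ coordinate is a principal ideal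
  set I : Submodule ℤ ℤ := M.map (LinearMap.proj i₀) with hIdef
  obtain ⟨b₀, hb₀M, hb₀⟩ : ∃ b₀ ∈ M, b₀ i₀ = Submodule.IsPrincipal.generator I := by
    have : Submodule.IsPrincipal.generator I ∈ I := Submodule.IsPrincipal.generator_mem I
    obtain ⟨b₀, hb₀M, hb₀⟩ := this
    exact ⟨b₀, hb₀M, hb₀⟩
  -- every element of M is an integer multiple of b₀
  have hcyc : ∀ x ∈ M, ∃ c : ℤ, x = c • b₀ := by
    intro x hx
    have hxI : x i₀ ∈ I := ⟨x, hx, rfl⟩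
    rw [← Submodule.IsPrincipal.span_singleton_generator I, Submodule.mem_span_singleton] at hxI
    obtain ⟨c, hc⟩ := hxI
    refine ⟨c, ?_⟩
    have hmem : x - c • b₀ ∈ M := M.sub_mem hx (M.smul_mem c hb₀M)
    have h0 : (x - c • b₀) i₀ = 0 := by
      simp [hb₀, ← hc, mul_comm]
    have := hMzero _ hmem h0
    have := sub_eq_zero.1 (by simpa using this)
    exact this
  obtain ⟨k, hk⟩ := hcyc v hvM
  have hkne : k ≠ 0 := by
    rintro rfl
    simp at hk
    exact hv hk
  have hb₀ne : b₀ ≠ 0 := by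
    rintro rfl
    simp at hk
    exact hv hk
  -- the quotient is finite, torsion-free, hence free; split the projection
  have hNZ : NoZeroSMulDivisors ℤ ((Fin (n+1) → ℤ) ⧸ M) := by
    constructor
    rintro c y hcy
    obtain ⟨x, rfl⟩ := Submodule.Quotient.mk_surjective M y
    by_cases hc : c = 0
    · exact Or.inl hc
    · right
      rw [← Submodule.Quotient.mk_smul, Submodule.Quotient.mk_eq_zero] at hcy
      rw [Submodule.Quotient.mk_eq_zero]
      intro i j
      have := hcy i j
      simp only [Pi.smul_apply, smul_eq_mul, mul_assoc] at this
      exact mul_left_cancel₀ hc this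
  haveI := hNZ
  haveI : Module.Free ℤ ((Fin (n+1) → ℤ) ⧸ M) := inferInstance
  obtain ⟨s, hs⟩ := Module.projective_lifting_property M.mkQ LinearMap.id
    (Submodule.mkQ_surjective M)
  -- the splitting map
  set F : (ℤ × ((Fin (n+1) → ℤ) ⧸ M)) →ₗ[ℤ] (Fin (n+1) → ℤ) :=
    (LinearMap.toSpanSingleton ℤ _ b₀) ∘ₗ (LinearMap.fst ℤ _ _) + s ∘ₗ (LinearMap.snd ℤ _ _)
    with hFdef
  have hmkQb₀ : M.mkQ b₀ = 0 := (Submodule.Quotient.mk_eq_zero M).2 hb₀M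
  have hsec : ∀ y, M.mkQ (s y) = y := fun y => congrFun (congrArg DFunLike.coe hs) y
  have hFbij : Function.Bijective F := by
    constructor
    · rintro ⟨c, y⟩ ⟨c', y'⟩ hF
      simp only [hFdef, LinearMap.add_apply, LinearMap.comp_apply, LinearMap.fst_apply,
        LinearMap.snd_apply, LinearMap.toSpanSingleton_apply] at hF
      have h1 : y = y' := by
        have := congrArg M.mkQ hF
        rw [map_add, map_add, _root_.map_smul, _root_.map_smul, hmkQb₀, hsec, hsec] at this
        simpa using this
      subst h1
      have h2 : c • b₀ = c' • b₀ := by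
        have := add_right_cancel hF
        exact this
      have : c = c' := by
        have := sub_eq_zero.2 h2
        rw [← sub_smul] at this
        rcases smul_eq_zero.1 this with h | h
        · exact sub_eq_zero.1 h
        · exact absurd h hb₀ne
      simp [this]
    · intro x
      obtain ⟨c, hc⟩ := hcyc (x - s (M.mkQ x)) (by
        rw [← Submodule.Quotient.mk_eq_zero]
        have : M.mkQ (x - s (M.mkQ x)) = 0 := by
          simp [map_sub, hsec]
        simpa using this)
      refine ⟨(c, M.mkQ x), ?_⟩
      simp only [hFdef, LinearMap.add_apply, LinearMap.comp_apply, LinearMap.fst_apply,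
        LinearMap.snd_apply, LinearMap.toSpanSingleton_apply]
      rw [← hc]
      abel
  set E := LinearEquiv.ofBijective F hFbij with hEdef
  -- a basis of ℤ^(n+1) coming through E
  set κ := Module.Free.ChooseBasisIndex ℤ ((Fin (n+1) → ℤ) ⧸ M) with hκdef
  set q : Module.Basis κ ℤ ((Fin (n+1) → ℤ) ⧸ M) := Module.Free.chooseBasis ℤ _ with hqdef
  set bprod : Module.Basis (Unit ⊕ κ) ℤ (ℤ × ((Fin (n+1) → ℤ) ⧸ M)) :=
    (Module.Basis.singleton Unit ℤ).prod q with hbproddef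
  set B : Module.Basis (Unit ⊕ κ) ℤ (Fin (n+1) → ℤ) := bprod.map E with hBdef
  have hB0 : B (Sum.inl ()) = b₀ := by
    simp only [hBdef, Module.Basis.map_apply, hbproddef, Module.Basis.prod_apply, hEdef]
    simp [LinearEquiv.ofBijective_apply, hFdef, Module.Basis.singleton_apply]
  set eIdx : (Unit ⊕ κ) ≃ Fin (n+1) := B.indexEquiv (Pi.basisFun ℤ (Fin (n+1))) with heIdx
  set σ : Equiv.Perm (Fin (n+1)) := Equiv.swap (eIdx (Sum.inl ())) 0 with hσ
  set Bf : Module.Basis (Fin (n+1)) ℤ (Fin (n+1) → ℤ) := B.reindex (eIdx.trans σ) with hBf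
  have hBf0 : Bf 0 = b₀ := by
    rw [hBf, Module.Basis.reindex_apply]
    have : (eIdx.trans σ).symm 0 = Sum.inl () := by
      simp only [Equiv.symm_trans_apply, hσ, Equiv.symm_swap, Equiv.swap_apply_right]
      exact eIdx.symm_apply_apply _
    rw [this, hB0]
  set W : Matrix (Fin (n+1)) (Fin (n+1)) ℤ := (Pi.basisFun ℤ (Fin (n+1))).toMatrix Bf with hW
  have hWcol : ∀ i, W i 0 = b₀ i := by
    intro i
    rw [hW, Module.Basis.toMatrix_apply, hBf0, Pi.basisFun_repr]
  have hdet : IsUnit W.det := by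
    have h1 : W * Bf.toMatrix (Pi.basisFun ℤ (Fin (n+1))) = 1 :=
      Module.Basis.toMatrix_mul_toMatrix_flip _ _
    have := congrArg Matrix.det h1
    rw [Matrix.det_mul, Matrix.det_one] at this
    exact IsUnit.of_mul_eq_one _ this
  refine ⟨W, k, Int.isUnit_iff.1 hdet, hkne, fun i => ?_⟩
  rw [hWcol i]
  exact congrFun hk i

end Completion

section Lift
variable {e : ℕ}

/-- Block matrix `[[1, m], [0, Ub]]`. -/
def liftMat (m : Fin e → ℤ) (Ub : Matrix (Fin e) (Fin e) ℤ) :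
    Matrix (Fin (e+1)) (Fin (e+1)) ℤ :=
  Matrix.of fun i j =>
    Fin.cases (motive := fun _ => ℤ) (if i = 0 then 1 else 0)
      (fun j' => Fin.cases (motive := fun _ => ℤ) (m j') (fun i' => Ub i' j') i) j

lemma liftMat_col_zero (m : Fin e → ℤ) (Ub : Matrix (Fin e) (Fin e) ℤ) :
    (fun i => liftMat m Ub i 0) = Fin.cons 1 0 := by
  funext i
  refine Fin.cases ?_ (fun i' => ?_) i <;> simp [liftMat, Fin.succ_ne_zero]

lemma liftMat_col_succ (m : Fin e → ℤ) (Ub : Matrix (Fin e) (Fin e) ℤ) (j : Fin e) :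
    (fun i => liftMat m Ub i j.succ) = Fin.cons (m j) (fun i => Ub i j) := by
  funext i
  refine Fin.cases ?_ (fun i' => ?_) i <;> simp [liftMat]

lemma liftMat_det (m : Fin e → ℤ) (Ub : Matrix (Fin e) (Fin e) ℤ) :
    (liftMat m Ub).det = Ub.det := by
  rw [Matrix.det_succ_column_zero]
  rw [Finset.sum_eq_single 0]
  · have h1 : liftMat m Ub 0 0 = 1 := by simp [liftMat]
    have h2 : (liftMat m Ub).submatrix (Fin.succAbove 0) Fin.succ = Ub := by
      ext i j
      simp [Matrix.submatrix_apply, Fin.succAbove_zero, liftMat]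
    rw [h1, h2]
    simp
  · intro i _ hi
    have : liftMat m Ub i 0 = 0 := by
      have := congrFun (liftMat_col_zero m Ub) i
      rw [this]
      rcases Fin.eq_zero_or_eq_succ i with rfl | ⟨i', rfl⟩
      · exact absurd rfl hi
      · simp
    rw [this]
    ring
  · intro h
    exact absurd (Finset.mem_univ _) h

end Lift

section Helpers
variable {d : ℕ}

lemma castMat_one : castMat (1 : Matrix (Fin d) (Fin d) ℤ) = 1 := by
  ext i j
  by_cases h : i = j <;> simp [castMat, Matrix.one_apply, h]

lemma exists_int_inverse (W : Matrix (Fin d) (Fin d) ℤ) (h : W.det = 1 ∨ W.det = -1) :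
    ∃ W', W * W' = 1 ∧ W' * W = 1 := by
  refine ⟨W.det • W.adjugate, ?_, ?_⟩
  · rw [Matrix.mul_smul, Matrix.mul_adjugate, smul_smul]
    rcases h with h | h <;> simp [h]
  · rw [Matrix.smul_mul, Matrix.adjugate_mul, smul_smul]
    rcases h with h | h <;> simp [h]

lemma dot_transform (Q A : Matrix (Fin d) (Fin d) ℝ) (x : Fin d → ℝ) :
    x ⬝ᵥ (Aᵀ * Q * A).mulVec x = (A.mulVec x) ⬝ᵥ Q.mulVec (A.mulVec x) := by
  rw [← Matrix.mulVec_mulVec, ← Matrix.mulVec_mulVec, Matrix.dotProduct_mulVec,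
    Matrix.vecMul_transpose]

lemma PD.transform {Q : Matrix (Fin d) (Fin d) ℝ} (hQ : PD Q)
    (W W' : Matrix (Fin d) (Fin d) ℤ) (hW'W : W' * W = 1) :
    PD ((castMat W)ᵀ * Q * castMat W) := by
  constructor
  · rw [Matrix.transpose_mul, Matrix.transpose_mul, Matrix.transpose_transpose, hQ.1,
      Matrix.mul_assoc]
  · intro x hx
    rw [dot_transform]
    refine hQ.2 _ (fun h => hx ?_)
    have h1 : (castMat W').mulVec ((castMat W).mulVec x) = x := by
      rw [Matrix.mulVec_mulVec, ← castMat_mul, hW'W, castMat_one, Matrix.one_mulVec]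
    rw [h, Matrix.mulVec_zero] at h1
    exact h1.symm

lemma qeval_single {e : ℕ} (Q : Matrix (Fin (e+1)) (Fin (e+1)) ℝ) :
    qeval Q (Pi.single 0 1) = Q 0 0 := by
  have hc : castVec (Pi.single (0 : Fin (e+1)) (1:ℤ)) = Pi.single 0 1 := by
    funext i
    by_cases h : i = 0 <;> simp [castVec, Pi.single_apply, h]
  rw [qeval_real, hc]
  simp [dotProduct, Matrix.mulVec, Pi.single_apply]

lemma qeval_smul {Q : Matrix (Fin d) (Fin d) ℝ} (k : ℤ) (x : Fin d → ℤ) :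
    qeval Q (k • x) = (k:ℝ)^2 * qeval Q x := by
  have hc : castVec (k • x) = (k:ℝ) • castVec x := by
    funext i; simp [castVec]
  rw [qeval_real, qeval_real, hc, Matrix.mulVec_smul, smul_dotProduct,
    dotProduct_smul]
  simp [smul_eq_mul]
  ring

lemma col_mul (A B : Matrix (Fin d) (Fin d) ℤ) (j : Fin d) :
    (fun i => (A * B) i j) = A.mulVec (fun k => B k j) := by
  funext i
  simp [Matrix.mul_apply, Matrix.mulVec, dotProduct]

lemma mulVec_single_col (W : Matrix (Fin d) (Fin d) ℤ) [NeZero d] :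
    W.mulVec (Pi.single 0 1) = fun i => W i 0 := by
  funext i
  simp [Matrix.mulVec, dotProduct, Pi.single_apply]

end Helpers

lemma main_induction : ∀ (d : ℕ) (Q : Matrix (Fin d) (Fin d) ℝ), PD Q →
    ∀ {ι : Type} (v : ι → (Fin d → ℤ)),
    (∀ j, qeval Q (v j) ≤ 1) →
    (Submodule.span ℝ (Set.range fun j => castVec (v j)) = ⊤) →
    ∃ U : Matrix (Fin d) (Fin d) ℤ, (U.det = 1 ∨ U.det = -1) ∧
      ((castMat U)ᵀ * Q * castMat U).trace ≤ d + d * ((d:ℝ) - 1) / 8 := by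
  intro d
  induction d with
  | zero =>
    intro Q hQ ι v hv1 hspan
    refine ⟨1, Or.inl Matrix.det_one, ?_⟩
    have h1 : ((castMat (1 : Matrix (Fin 0) (Fin 0) ℤ))ᵀ * Q * castMat 1).trace = 0 := by
      simp [Matrix.trace]
    rw [h1]
    norm_num
  | succ e IH =>
    intro Q hQ ι v hv1 hspan
    -- find a nonzero vector among the `v j`
    obtain ⟨j₀, hj₀⟩ : ∃ j₀, v j₀ ≠ 0 := by
      by_contra h
      push_neg at h
      have hle : Submodule.span ℝ (Set.range fun j => castVec (v j)) ≤ ⊥ := by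
        rw [Submodule.span_le]
        rintro _ ⟨j, rfl⟩
        simp [castVec_eq_zero_iff.2 (h j)]
      rw [hspan] at hle
      have : (Pi.single 0 1 : Fin (e+1) → ℝ) = 0 := by
        simpa using hle (Submodule.mem_top (x := Pi.single 0 1))
      have := congrFun this 0
      simp at this
    obtain ⟨W, k, hWdet, hk, hvk⟩ := exists_unimodular_col (v j₀) hj₀
    obtain ⟨W', hWW', hW'W⟩ := exists_int_inverse W hWdet
    set Q₁ := (castMat W)ᵀ * Q * castMat W with hQ₁def
    have hQ₁ : PD Q₁ := hQ.transform W W' hW'W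
    set b₀ : Fin (e+1) → ℤ := fun i => W i 0 with hb₀def
    have hvkb : v j₀ = k • b₀ := by
      funext i; simpa [smul_eq_mul] using hvk i
    -- `Q[b₀] ≤ 1`
    have hb₀norm : qeval Q b₀ ≤ 1 := by
      have h1 : (k:ℝ)^2 * qeval Q b₀ ≤ 1 := by
        rw [← qeval_smul, ← hvkb]; exact hv1 j₀
      have h2 : (1:ℝ) ≤ (k:ℝ)^2 := by
        have : (1:ℤ) ≤ |k| := Int.one_le_abs hk
        have h3 : (1:ℝ) ≤ |(k:ℝ)| := by exact_mod_cast this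
        nlinarith [abs_nonneg (k:ℝ), sq_abs (k:ℝ)]
      have h0 : 0 ≤ qeval Q b₀ := hQ.qeval_nonneg b₀
      nlinarith
    -- `a = Q₁ 0 0 ∈ (0, 1]`
    have ha0 : 0 < Q₁ 0 0 := hQ₁.a_pos
    have ha1 : Q₁ 0 0 ≤ 1 := by
      rw [← qeval_single Q₁, qeval_transform, mulVec_single_col]
      exact hb₀norm
    -- pass to the Schur complement
    set Qb := schur Q₁ with hQbdef
    have hQb : PD Qb := hQ₁.schurPD
    set v₁ : ι → Fin (e+1) → ℤ := fun j => W'.mulVec (v j) with hv₁def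
    have hWv₁ : ∀ j, W.mulVec (v₁ j) = v j := fun j => by
      rw [hv₁def, Matrix.mulVec_mulVec, hWW', Matrix.one_mulVec]
    have hv₁norm : ∀ j, qeval Q₁ (v₁ j) ≤ 1 := fun j => by
      rw [hQ₁def, qeval_transform, hWv₁]; exact hv1 j
    set vb : ι → Fin e → ℤ := fun j => Fin.tail (v₁ j) with hvbdef
    have htail : ∀ j, Fin.tail (castVec (v₁ j)) = castVec (vb j) := fun j => rfl
    have hvbnorm : ∀ j, qeval Qb (vb j) ≤ 1 := by
      intro j
      have hkey := key_identity Q₁ hQ₁.1 (ne_of_gt ha0) (castVec (v₁ j))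
      rw [htail j] at hkey
      have h1 : qeval Qb (vb j) ≤ qeval Q₁ (v₁ j) := by
        rw [qeval_real, qeval_real, hkey]
        nlinarith [sq_nonneg (castVec (v₁ j) 0 +
          ((fun i => Q₁ i.succ 0) ⬝ᵥ castVec (vb j)) / Q₁ 0 0), ha0.le]
      exact h1.trans (hv₁norm j)
    -- span condition downstairs
    have hspanb : Submodule.span ℝ (Set.range fun j => castVec (vb j)) = ⊤ := by
      set T : (Fin (e+1) → ℝ) →ₗ[ℝ] (Fin e → ℝ) := LinearMap.funLeft ℝ ℝ Fin.succ with hT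
      set f : (Fin (e+1) → ℝ) →ₗ[ℝ] (Fin (e+1) → ℝ) := (castMat W').mulVecLin with hf
      have hcomp : (fun j => castVec (vb j)) = (T ∘ₗ f) ∘ (fun j => castVec (v j)) := by
        funext j
        simp only [Function.comp_apply, LinearMap.comp_apply, hT, hf, Matrix.mulVecLin_apply,
          LinearMap.funLeft_apply]
        rw [← castVec_mulVec]
        rfl
      have hsurj : Function.Surjective (T ∘ₗ f) := by
        intro y
        refine ⟨(castMat W).mulVec (Fin.cons 0 y), ?_⟩
        simp only [LinearMap.comp_apply, hf, Matrix.mulVecLin_apply, Matrix.mulVec_mulVec,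
          ← castMat_mul, hW'W, castMat_one, Matrix.one_mulVec]
        funext i
        simp [hT, LinearMap.funLeft_apply, Fin.cons_succ]
      rw [hcomp, Set.range_comp, ← Submodule.map_span, hspan, Submodule.map_top,
        LinearMap.range_eq_top.2 hsurj]
    obtain ⟨Ub, hUbdet, hUbtr⟩ := IH Qb hQb vb hvbnorm hspanb
    rw [trace_eq_sum_qeval] at hUbtr
    -- construct the lift
    set bvec : Fin e → ℝ := fun i => Q₁ i.succ 0 with hbvec
    set m : Fin e → ℤ := fun j => -round ((bvec ⬝ᵥ castVec (fun i => Ub i j)) / Q₁ 0 0) with hm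
    set U₁ := liftMat m Ub with hU₁
    -- first column evaluation
    have hcol0 : qeval Q₁ (fun i => U₁ i 0) = Q₁ 0 0 := by
      rw [hU₁, liftMat_col_zero]
      have hc : castVec (Fin.cons 1 0 : Fin (e+1) → ℤ) = Fin.cons 1 0 := by
        funext i
        refine Fin.cases ?_ (fun i' => ?_) i <;> simp [castVec]
      rw [qeval_real, hc, key_identity Q₁ hQ₁.1 (ne_of_gt ha0)]
      rw [Fin.tail_cons, Fin.cons_zero]
      simp [div_eq_mul_inv]
    -- other columns
    have hcolsucc : ∀ j : Fin e, qeval Q₁ (fun i => U₁ i j.succ) ≤ 1/4 + qeval Qb (fun i => Ub i j) := by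
      intro j
      rw [hU₁, liftMat_col_succ]
      have hc : castVec (Fin.cons (m j) (fun i => Ub i j) : Fin (e+1) → ℤ)
          = Fin.cons ((m j : ℝ)) (castVec (fun i => Ub i j)) := by
        funext i
        refine Fin.cases ?_ (fun i' => ?_) i <;> simp [castVec]
      rw [qeval_real, hc, key_identity Q₁ hQ₁.1 (ne_of_gt ha0)]
      rw [Fin.tail_cons, Fin.cons_zero]
      set r := (bvec ⬝ᵥ castVec (fun i => Ub i j)) / Q₁ 0 0 with hr
      have hmr : (m j : ℝ) + r = r - (round r : ℝ) := by
        rw [hm]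
        push_cast
        ring
      have habs : |r - (round r : ℝ)| ≤ 1/2 := abs_sub_round r
      have hsq : (r - (round r : ℝ))^2 ≤ 1/4 := by nlinarith [abs_nonneg (r - (round r:ℝ)), sq_abs (r - (round r:ℝ))]
      have h1 : Q₁ 0 0 * ((m j : ℝ) + r)^2 ≤ 1/4 := by
        rw [hmr]
        nlinarith
      have : qeval Qb (fun i => Ub i j)
          = castVec (fun i => Ub i j) ⬝ᵥ Qb.mulVec (castVec (fun i => Ub i j)) := rfl
      rw [← this] at *
      linarith
    -- assemble
    refine ⟨W * U₁, ?_, ?_⟩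
    · have hdet : (W * U₁).det = W.det * Ub.det := by
        rw [Matrix.det_mul, hU₁, liftMat_det]
      rcases hWdet with h1 | h1 <;> rcases hUbdet with h2 | h2 <;>
        rw [hdet, h1, h2] <;> norm_num
    · rw [trace_eq_sum_qeval]
      have hcols : ∀ j, qeval Q ((fun i => (W * U₁) i j)) = qeval Q₁ (fun i => U₁ i j) := by
        intro j
        rw [col_mul, hQ₁def, qeval_transform]
      simp only [hcols]
      rw [Fin.sum_univ_succ, hcol0]
      have hsum : ∑ j : Fin e, qeval Q₁ (fun i => U₁ i j.succ)
          ≤ ∑ j : Fin e, (1/4 + qeval Qb (fun i => Ub i j)) :=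
        Finset.sum_le_sum fun j _ => hcolsucc j
      have hsum2 : ∑ j : Fin e, (1/4 + qeval Qb (fun i => Ub i j))
          = (e:ℝ)/4 + ∑ j : Fin e, qeval Qb (fun i => Ub i j) := by
        rw [Finset.sum_add_distrib, Finset.sum_const, Finset.card_univ, Fintype.card_fin]
        push_cast
        ring
      have := hUbtr
      push_cast
      nlinarith

/-- `Q` is a perfect positive definite quadratic form with arithmetical minimum
`lam`. -/
def IsPerfect {d : ℕ} (Q : Matrix (Fin d) (Fin d) ℝ) (lam : ℝ) : Prop :=
  Q.PosDef ∧ IsLeast {r : ℝ | ∃ x : Fin d → ℤ, x ≠ 0 ∧ qeval Q x = r} lam ∧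
    ∀ Q' : Matrix (Fin d) (Fin d) ℝ, Q'.IsSymm →
      (∀ x : Fin d → ℤ, qeval Q x = lam → qeval Q' x = lam) → Q' = Q

lemma rank_one_quad {d : ℕ} (w : Fin d → ℝ) (c : Fin d → ℝ) :
    c ⬝ᵥ (Matrix.of fun i j => w i * w j).mulVec c = (w ⬝ᵥ c)^2 := by
  simp only [dotProduct, Matrix.mulVec, Matrix.of_apply, dotProduct]
  rw [pow_two, Finset.sum_mul_sum]
  simp only [Finset.mul_sum]
  exact Finset.sum_congr rfl fun i _ => Finset.sum_congr rfl fun j _ => by ring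

/-- The minimal vectors of a perfect form span `ℝ^d`. -/
lemma perfect_span {d : ℕ} (Q : Matrix (Fin d) (Fin d) ℝ) (hQ : IsPerfect Q 1)
    (hPD : PD Q) :
    Submodule.span ℝ (Set.range fun j : {x : Fin d → ℤ // qeval Q x = 1} =>
      castVec j.val) = ⊤ := by
  by_contra hne
  set p := Submodule.span ℝ (Set.range fun j : {x : Fin d → ℤ // qeval Q x = 1} =>
      castVec j.val) with hp
  have hlt : p < ⊤ := lt_top_iff_ne_top.2 hne
  obtain ⟨f, hf0, hfmap⟩ := Submodule.exists_dual_map_eq_bot_of_lt_top hlt inferInstance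
  set w : Fin d → ℝ := fun i => f (fun j => if i = j then 1 else 0) with hw
  have hfw : ∀ x : Fin d → ℝ, f x = w ⬝ᵥ x := by
    intro x
    conv_lhs => rw [pi_eq_sum_univ x]
    rw [map_sum]
    simp only [_root_.map_smul, smul_eq_mul]
    rw [dotProduct]
    exact Finset.sum_congr rfl fun i _ => mul_comm _ _
  have hwne : w ≠ 0 := by
    intro h
    apply hf0
    apply LinearMap.ext
    intro x
    rw [hfw, h]
    simp
  set Q' : Matrix (Fin d) (Fin d) ℝ := Q + Matrix.of (fun i j => w i * w j) with hQ'
  have hQ'symm : Q'.IsSymm := by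
    rw [Matrix.IsSymm, hQ', Matrix.transpose_add, hPD.1]
    congr 1
    ext i j
    simp [Matrix.transpose_apply, mul_comm]
  have hQ'eval : ∀ x : Fin d → ℤ, qeval Q x = 1 → qeval Q' x = 1 := by
    intro x hx
    have hxp : castVec x ∈ p := by
      rw [hp]
      exact Submodule.subset_span ⟨⟨x, hx⟩, rfl⟩
    have hfx : f (castVec x) = 0 := by
      have : f (castVec x) ∈ Submodule.map f p := ⟨castVec x, hxp, rfl⟩
      rw [hfmap] at this
      simpa using this
    rw [hfw] at hfx
    rw [qeval_real, hQ', Matrix.add_mulVec, dotProduct_add, rank_one_quad, hfx]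
    rw [← qeval_real, hx]
    norm_num
  have := hQ.2.2 Q' hQ'symm hQ'eval
  rw [hQ'] at this
  have hzero : (Matrix.of fun i j => w i * w j) = (0 : Matrix (Fin d) (Fin d) ℝ) := by
    have h := this
    nth_rewrite 2 [← add_zero Q] at h
    exact add_left_cancel h
  obtain ⟨i, hi⟩ : ∃ i, w i ≠ 0 := by
    by_contra h
    push_neg at h
    exact hwne (funext h)
  have := congrFun (congrFun hzero i) i
  simp only [Matrix.of_apply, Matrix.zero_apply] at this
  exact hi (by nlinarith)

/-- Every perfect positive definite quadratic form with arithmetical minimum `1`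
is arithmetically equivalent to a form of trace at most `d · (4/3)^(d(d-1)/2)`. -/
theorem stmt10 (d : ℕ) (hd : 1 ≤ d) (Q : Matrix (Fin d) (Fin d) ℝ)
    (hQ : IsPerfect Q 1) :
    ∃ U : Matrix (Fin d) (Fin d) ℤ, (U.det = 1 ∨ U.det = -1) ∧
      ((castMat U)ᵀ * Q * castMat U).trace ≤ d * (4 / 3 : ℝ) ^ (d * (d - 1) / 2) := by
  have hPD : PD Q := by
    constructor
    · have h := hQ.1.1
      ext i j
      calc Qᵀ i j = Q j i := rfl
        _ = star (Q j i) := (star_trivial _).symm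
        _ = Qᴴ i j := rfl
        _ = Q i j := by rw [h]
    · intro x hx
      have := hQ.1.dotProduct_mulVec_pos hx
      simpa using this
  have hspan := perfect_span Q hQ hPD
  obtain ⟨U, hUdet, hUtr⟩ := main_induction d Q hPD
    (fun j : {x : Fin d → ℤ // qeval Q x = 1} => j.val)
    (fun j => le_of_eq j.2) hspan
  refine ⟨U, hUdet, hUtr.trans ?_⟩
  -- arithmetic comparison
  set n := d * (d - 1) / 2 with hn
  have heven : 2 ∣ d * (d - 1) := by
    have h1 : Even ((d-1) * (d-1+1)) := Nat.even_mul_succ_self (d-1)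
    rw [Nat.sub_add_cancel hd] at h1
    exact (by rwa [mul_comm] at h1 : Even (d * (d-1))).two_dvd
  have hn2 : (n : ℝ) * 2 = (d:ℝ) * ((d:ℝ) - 1) := by
    have : n * 2 = d * (d - 1) := Nat.div_mul_cancel heven
    have h2 := congrArg (Nat.cast (R := ℝ)) this
    push_cast [Nat.cast_sub hd] at h2
    linarith
  have hpow : 1 + (n:ℝ) * (1/3) ≤ (4/3:ℝ)^n := by
    have h := one_add_mul_le_pow (a := (1/3:ℝ)) (by norm_num) n
    have : ((1:ℝ) + 1/3) = 4/3 := by norm_num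
    rwa [this] at h
  have hd1 : (1:ℝ) ≤ (d:ℝ) := by exact_mod_cast hd
  have h5 : (d:ℝ) * (1 + (n:ℝ)*(1/3)) ≤ (d:ℝ) * (4/3:ℝ)^n :=
    mul_le_mul_of_nonneg_left hpow (by positivity)
  nlinarith [h5, hn2, hd1, mul_nonneg (sub_nonneg.2 hd1) (sub_nonneg.2 hd1)]
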